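/- Let n ≥ 3 and suppose π/2 < α < 3π/4 − π/(2n), π < γ < 3π/2, α + γ > 2π − π/n, and γ ≤ dgn_n(α) with Δ(α,γ) ≥ 0. Then 0 < (1/2)·cot(π/n)·(cot α + cot γ) < 1, i.e., the axis of the quadratic f lies strictly between 0 and 1. -/

import Mathlib

open Real

noncomputable def dgn (n : ℕ) (α : ℝ) : ℝ :=
  π - Real.arctan ((Real.cos (π/n))^2 * ((Real.sin (π/n) + 1)^2)⁻¹ * Real.tan α)

lemma cot_add_cot (x y : ℝ) (hx : Real.sin x ≠ 0) (hy : Real.sin y ≠ 0) :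
    Real.cot x + Real.cot y = Real.sin (x + y) / (Real.sin x * Real.sin y) := by
  rw [Real.cot_eq_cos_div_sin, Real.cot_eq_cos_div_sin, Real.sin_add]
  field_simp
  ring

set_option maxHeartbeats 1000000 in
theorem stmt15 (n : ℕ) (hn : 3 ≤ n) (α γ : ℝ)
    (h1 : π/2 < α) (h2 : α < 3*π/4 - π/(2*n)) (h3 : π < γ) (h4 : γ < 3*π/2)
    (h5 : α + γ > 2*π - π/n) (h6 : γ ≤ dgn n α)
    (h7 : (Real.cot γ)^2 + 2*(2*(Real.tan (π/n))^2 + 1) * Real.cot α * Real.cot γ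
        + (Real.cot α)^2 ≥ 0) :
    0 < (1/2) * Real.cot (π/n) * (Real.cot α + Real.cot γ) ∧
    (1/2) * Real.cot (π/n) * (Real.cot α + Real.cot γ) < 1 := by
  have hπ := Real.pi_pos
  have hn0 : (0:ℝ) < n := by positivity
  have hn3 : (3:ℝ) ≤ n := by exact_mod_cast hn
  have ht0 : 0 < π/n := by positivity
  have ht3 : π/n ≤ π/3 := by
    rw [div_le_div_iff₀ hn0 (by norm_num)]
    nlinarith
  have h2' : α < 3*π/4 - (π/n)/2 := by
    have : π/(2*(n:ℝ)) = (π/n)/2 := by rw [div_div, mul_comm]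
    linarith [h2, this.symm.le]
  -- basic sign facts
  have hsa : 0 < Real.sin α := by
    apply Real.sin_pos_of_pos_of_lt_pi (by linarith) (by linarith)
  have hca : Real.cos α < 0 :=
    Real.cos_neg_of_pi_div_two_lt_of_lt h1 (by linarith)
  have hsg : Real.sin γ < 0 := by
    have : 0 < Real.sin (γ - π) :=
      Real.sin_pos_of_pos_of_lt_pi (by linarith) (by linarith)
    rw [Real.sin_sub_pi] at this; linarith
  have hst : 0 < Real.sin (π/n) :=
    Real.sin_pos_of_pos_of_lt_pi ht0 (by linarith)
  have hct : 0 < Real.cos (π/n) :=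
    Real.cos_pos_of_mem_Ioo ⟨by linarith, by linarith⟩
  have hcot_t : 0 < Real.cot (π/n) := by
    rw [Real.cot_eq_cos_div_sin]; positivity
  -- α + γ < 2π from h6
  have hta : Real.tan α < 0 := by
    rw [Real.tan_eq_sin_div_cos]
    exact div_neg_of_pos_of_neg hsa hca
  have hc1 : (Real.cos (π/n))^2 * ((Real.sin (π/n) + 1)^2)⁻¹ < 1 := by
    rw [mul_inv_lt_iff₀ (by positivity)]
    nlinarith [Real.cos_le_one (π/n)]
  have hc0 : 0 < (Real.cos (π/n))^2 * ((Real.sin (π/n) + 1)^2)⁻¹ := by positivity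
  have harct : α - π < Real.arctan ((Real.cos (π/n))^2 * ((Real.sin (π/n) + 1)^2)⁻¹ * Real.tan α) := by
    have h1' : Real.arctan (Real.tan (α - π)) = α - π :=
      Real.arctan_tan (by linarith) (by linarith)
    have h2'' : Real.tan (α - π) = Real.tan α := Real.tan_sub_pi α
    have hlt : Real.tan α < (Real.cos (π/n))^2 * ((Real.sin (π/n) + 1)^2)⁻¹ * Real.tan α := by
      nlinarith
    calc α - π = Real.arctan (Real.tan α) := by rw [← h2'', h1']
    _ < _ := Real.arctan_strictMono hlt
  have hsum2 : α + γ < 2*π := by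
    have := h6
    unfold dgn at this
    linarith
  -- positivity
  have hssum : Real.sin (α + γ) < 0 := by
    have : 0 < Real.sin (α + γ - π) :=
      Real.sin_pos_of_pos_of_lt_pi (by linarith) (by linarith)
    rw [Real.sin_sub_pi] at this; linarith
  have hkey : 0 < Real.cot α + Real.cot γ := by
    rw [cot_add_cot α γ hsa.ne' hsg.ne]
    exact div_pos_of_neg_of_neg hssum (mul_neg_of_pos_of_neg hsa hsg)
  constructor
  · have h := mul_pos hcot_t hkey
    linarith
  -- upper bound
  have hsat : 0 < Real.sin (α + π/n) :=
    Real.sin_pos_of_pos_of_lt_pi (by linarith) (by linarith)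
  -- cot γ < - cot (α + π/n)
  have hA : Real.cot γ < - Real.cot (α + π/n) := by
    have hsum3 : 0 < Real.sin (γ + (α + π/n)) := by
      have : 0 < Real.sin (γ + (α + π/n) - 2*π) :=
        Real.sin_pos_of_pos_of_lt_pi (by linarith) (by linarith)
      have he : γ + (α + π/n) = (γ + (α + π/n) - 2*π) + 2*π := by ring
      rw [he, Real.sin_add_two_pi]
      linarith
    have := cot_add_cot γ (α + π/n) hsg.ne hsat.ne'
    have hneg : Real.cot γ + Real.cot (α + π/n) < 0 := by
      rw [this]
      exact div_neg_of_pos_of_neg hsum3 (mul_neg_of_neg_of_pos hsg hsat)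
    linarith
  -- cot t * (cot α - cot (α + t)) < 2
  have hB : Real.cot (π/n) * (Real.cot α - Real.cot (α + π/n)) < 2 := by
    have hdiff : Real.cot α - Real.cot (α + π/n)
        = Real.sin (π/n) / (Real.sin α * Real.sin (α + π/n)) := by
      rw [Real.cot_eq_cos_div_sin, Real.cot_eq_cos_div_sin,
        div_sub_div _ _ hsa.ne' hsat.ne']
      congr 1
      have h := Real.sin_sub (α + π/n) α
      have h2 : α + π/↑n - α = π/↑n := by ring
      rw [h2] at h
      linarith
    rw [hdiff, Real.cot_eq_cos_div_sin]
    rw [div_mul_div_comm, div_lt_iff₀ (by positivity)]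
    have hcos2 : Real.cos (2*α + π/n) < 0 :=
      Real.cos_neg_of_pi_div_two_lt_of_lt (by linarith) (by linarith)
    have hprod : 2 * Real.sin α * Real.sin (α + π/n)
        = Real.cos (π/n) - Real.cos (2*α + π/n) := by
      have h2a : 2*α + π/n = α + (α + π/n) := by ring
      have e1 : (π:ℝ)/n = (α + π/n) - α := by ring
      rw [h2a, Real.cos_add, e1, Real.cos_sub]
      ring
    calc Real.cos (π/n) * Real.sin (π/n)
        < Real.sin (π/n) * (Real.cos (π/n) - Real.cos (2*α + π/n)) := by
          nlinarith [mul_pos hst (neg_pos.mpr hcos2)]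
      _ = 2 * (Real.sin (π/n) * (Real.sin α * Real.sin (α + π/n))) := by
          rw [← hprod]; ring
  have hkα : Real.cot (π/n) * (Real.cot α + Real.cot γ)
      < Real.cot (π/n) * (Real.cot α - Real.cot (α + π/n)) := by
    apply mul_lt_mul_of_pos_left (by linarith) hcot_t
  linarith
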